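/- For every well-tempered scoring game G there exist games G^+ and G^- with gap_0(G^±) = 0 such that G ≈_+ G^+ and G ≈_- G^-; moreover G^+ ≳ G^-. If G takes all its final scores in a set S ⊆ ℤ, then G^+ and G^- can be chosen S-valued. -/

import Mathlib

/-- Well-tempered scoring game trees: an integer (final score) or a position
with lists of Left and Right options. -/
inductive WT : Type where
  | int : ℤ → WT
  | node : List WT → List WT → WT

namespace WT

/-- Left options. -/
def lopts : WT → List WT
  | int _ => []
  | node L _ => L

/-- Right options. -/
def ropts : WT → List WT
  | int _ => []
  | node _ R => R

theorem sizeOf_lt_of_mem_lopts : ∀ {G g : WT}, g ∈ G.lopts → sizeOf g < sizeOf G := by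
  intro G g h
  cases G with
  | int n => simp [lopts] at h
  | node L R =>
    simp only [lopts] at h
    have h1 := List.sizeOf_lt_of_mem h
    have h2 : sizeOf (WT.node L R) = 1 + sizeOf L + sizeOf R := by simp
    omega

theorem sizeOf_lt_of_mem_ropts : ∀ {G g : WT}, g ∈ G.ropts → sizeOf g < sizeOf G := by
  intro G g h
  cases G with
  | int n => simp [ropts] at h
  | node L R =>
    simp only [ropts] at h
    have h1 := List.sizeOf_lt_of_mem h
    have h2 : sizeOf (WT.node L R) = 1 + sizeOf L + sizeOf R := by simp
    omega

/-- Disjunctive sum of two games. -/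
def add (G H : WT) : WT :=
  match G, H with
  | int m, int n => int (m + n)
  | G, H =>
    node ((G.lopts.attach.map fun g => add g.1 H) ++ (H.lopts.attach.map fun h => add G h.1))
         ((G.ropts.attach.map fun g => add g.1 H) ++ (H.ropts.attach.map fun h => add G h.1))
termination_by sizeOf G + sizeOf H
decreasing_by
  all_goals
    first
      | (have := sizeOf_lt_of_mem_lopts g.2; omega)
      | (have := sizeOf_lt_of_mem_lopts h.2; omega)
      | (have := sizeOf_lt_of_mem_ropts g.2; omega)
      | (have := sizeOf_lt_of_mem_ropts h.2; omega)

/-- Negation of a game: swap players and negate scores. -/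
def neg : WT → WT
  | int n => int (-n)
  | node L R =>
    node ((WT.node L R).ropts.attach.map fun g => neg g.1)
         ((WT.node L R).lopts.attach.map fun g => neg g.1)
termination_by G => sizeOf G
decreasing_by
  all_goals
    first
      | exact sizeOf_lt_of_mem_lopts g.2
      | exact sizeOf_lt_of_mem_ropts g.2

def lmax : List ℤ → ℤ
  | [] => 0
  | x :: xs => xs.foldl max x

def lmin : List ℤ → ℤ
  | [] => 0
  | x :: xs => xs.foldl min x

/-- The pair (left outcome, right outcome). -/
def out : WT → ℤ × ℤ
  | int n => (n, n)
  | node L R =>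
    (lmax ((WT.node L R).lopts.attach.map fun g => (out g.1).2),
     lmin ((WT.node L R).ropts.attach.map fun g => (out g.1).1))
termination_by G => sizeOf G
decreasing_by
  all_goals
    first
      | exact sizeOf_lt_of_mem_lopts g.2
      | exact sizeOf_lt_of_mem_ropts g.2

/-- Left outcome L(G): optimal score when Left moves first. -/
def Lout (G : WT) : ℤ := G.out.1

/-- Right outcome R(G): optimal score when Right moves first. -/
def Rout (G : WT) : ℤ := G.out.2

/-- `IsWT G p` : `G` is a well-tempered game of parity `p`
(`false` = even-tempered, `true` = odd-tempered). -/
inductive IsWT : WT → Bool → Prop where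
  | int (n : ℤ) : IsWT (WT.int n) false
  | node {L R : List WT} {p : Bool} (hL : L ≠ []) (hR : R ≠ [])
      (hLp : ∀ g ∈ L, IsWT g p) (hRp : ∀ g ∈ R, IsWT g p) :
      IsWT (WT.node L R) (!p)

/-- `G` is a well-tempered game (of some parity). -/
def Wt (G : WT) : Prop := ∃ p, IsWT G p

/-- Parity, computed structurally (`false` = even-tempered, `true` = odd-tempered;
agrees with `IsWT` on well-tempered games). -/
def par : WT → Bool
  | int _ => false
  | node [] _ => true
  | node (g :: _) _ => !(par g)

/-- Final score under optimal play when Left moves last. -/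
def Lf (G : WT) : ℤ := if G.par then G.Lout else G.Rout

/-- Final score under optimal play when Right moves last. -/
def Rf (G : WT) : ℤ := if G.par then G.Rout else G.Lout

/-- `G ≲ H` : for every well-tempered `X`, `L(G+X) ≤ L(H+X)` and `R(G+X) ≤ R(H+X)`. -/
def Le (G H : WT) : Prop :=
  ∀ X : WT, X.Wt → (G.add X).Lout ≤ (H.add X).Lout ∧ (G.add X).Rout ≤ (H.add X).Rout

/-- `G ≳ H`. -/
def Ge (G H : WT) : Prop := Le H G

/-- `G ≈ H` : equivalence of scoring games. -/
def Equiv (G H : WT) : Prop :=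
  ∀ X : WT, X.Wt → (G.add X).Lout = (H.add X).Lout ∧ (G.add X).Rout = (H.add X).Rout

/-- `G` and `H` are well-tempered with the same parity. -/
def SamePar (G H : WT) : Prop := ∃ p, IsWT G p ∧ IsWT H p

/-- `G` takes values in `S`: every integer subgame lies in `S`. -/
inductive Valued (S : Set ℤ) : WT → Prop where
  | int {n : ℤ} : n ∈ S → Valued S (WT.int n)
  | node {L R : List WT} : (∀ g ∈ L, Valued S g) → (∀ g ∈ R, Valued S g) →
      Valued S (WT.node L R)

/-- `Subgame H G` : `H` is a subgame of `G`. -/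
inductive Subgame : WT → WT → Prop where
  | refl (G : WT) : Subgame G G
  | left {H G' : WT} {L R : List WT} : G' ∈ L → Subgame H G' → Subgame H (WT.node L R)
  | right {H G' : WT} {L R : List WT} : G' ∈ R → Subgame H G' → Subgame H (WT.node L R)

/-- `gap G p` : supremum of `R(H) - L(H)` over subgames `H` of `G` of parity `p`
(as an element of `WithBot ℤ`; the supremum of the empty set is `⊥ = -∞`). -/
noncomputable def gap (G : WT) (p : Bool) : WithBot ℤ :=
  sSup {x : WithBot ℤ | ∃ H : WT, Subgame H G ∧ IsWT H p ∧ x = ((H.Rout - H.Lout : ℤ) : WithBot ℤ)}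

/-- Heating by `t`. -/
def heat (t : ℤ) : WT → WT
  | int n => int n
  | node L R =>
    node ((WT.node L R).lopts.attach.map fun g => (WT.int t).add (heat t g.1))
         ((WT.node L R).ropts.attach.map fun g => (WT.int (-t)).add (heat t g.1))
termination_by G => sizeOf G
decreasing_by
  all_goals
    first
      | exact sizeOf_lt_of_mem_lopts g.2
      | exact sizeOf_lt_of_mem_ropts g.2

end WT

namespace WT

theorem add_int_int (m n : ℤ) : (int m).add (int n) = int (m+n) := by
  rw [add]

theorem add_node_left (L R : List WT) (X : WT) :
    (node L R).add X = node ((L.map (fun g => g.add X)) ++ (X.lopts.map (fun x => (node L R).add x)))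
      ((R.map (fun g => g.add X)) ++ (X.ropts.map (fun x => (node L R).add x))) := by
  rw [add]
  · simp [lopts, ropts, List.attach_map_val]
  · intro m n h1 h2; cases h1

theorem add_node_right (G : WT) (L R : List WT) :
    G.add (node L R) = node ((G.lopts.map (fun g => g.add (node L R))) ++ (L.map (fun x => G.add x)))
      ((G.ropts.map (fun g => g.add (node L R))) ++ (R.map (fun x => G.add x))) := by
  cases G with
  | int n =>
      rw [add]
      · simp [lopts, ropts, List.attach_map_val]
      · intro m n h1 h2; cases h2
  | node a b =>
      rw [add]
      · simp [lopts, ropts, List.attach_map_val]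
      · intro m n h1 h2; cases h2

theorem out_node (L R : List WT) :
    out (node L R) = (lmax (L.map (fun g => (out g).2)), lmin (R.map (fun g => (out g).1))) := by
  rw [out]
  simp [lopts, ropts, List.attach_map_val]

theorem Lout_node (L R : List WT) : Lout (node L R) = lmax (L.map Rout) := by
  show (out (node L R)).1 = _
  rw [out_node]
  rfl
theorem Rout_node (L R : List WT) : Rout (node L R) = lmin (R.map Lout) := by
  show (out (node L R)).2 = _
  rw [out_node]
  rfl
theorem Lout_int (n : ℤ) : Lout (int n) = n := by simp [Lout, out]
theorem Rout_int (n : ℤ) : Rout (int n) = n := by simp [Rout, out]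

end WT
namespace WT

private theorem foldl_max_init_le (l : List ℤ) : ∀ x : ℤ, x ≤ l.foldl max x := by
  induction l with
  | nil => intro x; exact le_refl x
  | cons y ys ih => intro x; exact le_trans (le_max_left x y) (ih (max x y))

private theorem foldl_max_mem (l : List ℤ) : ∀ x : ℤ, l.foldl max x = x ∨ l.foldl max x ∈ l := by
  induction l with
  | nil => intro x; exact Or.inl rfl
  | cons y ys ih =>
      intro x
      simp only [List.foldl_cons]
      rcases ih (max x y) with h | h
      · rcases max_choice x y with h2 | h2
        · exact Or.inl (h.trans h2)
        · exact Or.inr (by rw [h, h2]; exact List.mem_cons_self)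
      · exact Or.inr (List.mem_cons_of_mem _ h)

private theorem le_foldl_max (l : List ℤ) : ∀ (x a : ℤ), a ∈ l → a ≤ l.foldl max x := by
  induction l with
  | nil => intro _ a h; cases h
  | cons y ys ih =>
      intro x a h
      rcases List.mem_cons.1 h with rfl | h
      · exact le_trans (le_max_right x a) (foldl_max_init_le ys _)
      · exact ih _ a h

theorem lmax_mem {l : List ℤ} (h : l ≠ []) : lmax l ∈ l := by
  cases l with
  | nil => exact absurd rfl h
  | cons x xs =>
      rcases foldl_max_mem xs x with h2 | h2
      · rw [lmax, h2]; exact List.mem_cons_self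
      · rw [lmax]; exact List.mem_cons_of_mem _ h2

theorem le_lmax_of_mem {l : List ℤ} {a : ℤ} (h : a ∈ l) : a ≤ lmax l := by
  cases l with
  | nil => cases h
  | cons x xs =>
      rcases List.mem_cons.1 h with rfl | h
      · exact foldl_max_init_le xs a
      · exact le_foldl_max xs x a h

theorem lmax_le {l : List ℤ} {b : ℤ} (h : l ≠ []) (hb : ∀ a ∈ l, a ≤ b) : lmax l ≤ b :=
  hb _ (lmax_mem h)

private theorem foldl_min_le_init (l : List ℤ) : ∀ x : ℤ, l.foldl min x ≤ x := by
  induction l with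
  | nil => intro x; exact le_refl x
  | cons y ys ih => intro x; exact le_trans (ih (min x y)) (min_le_left x y)

private theorem foldl_min_mem (l : List ℤ) : ∀ x : ℤ, l.foldl min x = x ∨ l.foldl min x ∈ l := by
  induction l with
  | nil => intro x; exact Or.inl rfl
  | cons y ys ih =>
      intro x
      simp only [List.foldl_cons]
      rcases ih (min x y) with h | h
      · rcases min_choice x y with h2 | h2
        · exact Or.inl (h.trans h2)
        · exact Or.inr (by rw [h, h2]; exact List.mem_cons_self)
      · exact Or.inr (List.mem_cons_of_mem _ h)

private theorem foldl_min_le (l : List ℤ) : ∀ (x a : ℤ), a ∈ l → l.foldl min x ≤ a := by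
  induction l with
  | nil => intro _ a h; cases h
  | cons y ys ih =>
      intro x a h
      rcases List.mem_cons.1 h with rfl | h
      · exact le_trans (foldl_min_le_init ys _) (min_le_right x a)
      · exact ih _ a h

theorem lmin_mem {l : List ℤ} (h : l ≠ []) : lmin l ∈ l := by
  cases l with
  | nil => exact absurd rfl h
  | cons x xs =>
      rcases foldl_min_mem xs x with h2 | h2
      · rw [lmin, h2]; exact List.mem_cons_self
      · rw [lmin]; exact List.mem_cons_of_mem _ h2

theorem lmin_le_of_mem {l : List ℤ} {a : ℤ} (h : a ∈ l) : lmin l ≤ a := by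
  cases l with
  | nil => cases h
  | cons x xs =>
      rcases List.mem_cons.1 h with rfl | h
      · exact foldl_min_le_init xs a
      · exact foldl_min_le xs x a h

theorem le_lmin {l : List ℤ} {b : ℤ} (h : l ≠ []) (hb : ∀ a ∈ l, b ≤ a) : b ≤ lmin l :=
  hb _ (lmin_mem h)

theorem lmax_eq_lmax {A B : List ℤ} (hA : A ≠ []) (hB : B ≠ [])
    (h1 : ∀ a ∈ A, a ≤ lmax B) (h2 : ∀ b ∈ B, b ≤ lmax A) : lmax A = lmax B :=
  le_antisymm (h1 _ (lmax_mem hA)) (h2 _ (lmax_mem hB))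

theorem lmin_eq_lmin {A B : List ℤ} (hA : A ≠ []) (hB : B ≠ [])
    (h1 : ∀ a ∈ A, lmin B ≤ a) (h2 : ∀ b ∈ B, lmin A ≤ b) : lmin A = lmin B :=
  le_antisymm (h2 _ (lmin_mem hB)) (h1 _ (lmin_mem hA))

end WT
namespace WT

theorem sizeOf_lt_node_left {g : WT} {L R : List WT} (h : g ∈ L) :
    sizeOf g < sizeOf (node L R) := sizeOf_lt_of_mem_lopts (by simpa [lopts])

theorem sizeOf_lt_node_right {g : WT} {L R : List WT} (h : g ∈ R) :
    sizeOf g < sizeOf (node L R) := sizeOf_lt_of_mem_ropts (by simpa [ropts])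

theorem isWT_node_inv {L R : List WT} {p : Bool} (h : IsWT (node L R) p) :
    L ≠ [] ∧ R ≠ [] ∧ (∀ g ∈ L, IsWT g (!p)) ∧ (∀ g ∈ R, IsWT g (!p)) := by
  cases h with
  | node hL hR hLp hRp => simpa using ⟨hL, hR, hLp, hRp⟩

theorem isWT_int_inv {n : ℤ} {p : Bool} (h : IsWT (int n) p) : p = false := by
  cases h; rfl

theorem par_eq_of_isWT {G : WT} {p : Bool} (h : IsWT G p) : G.par = p := by
  induction h with
  | int n => rfl
  | @node L R q hL hR hLp hRp ihL ihR =>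
      cases L with
      | nil => exact absurd rfl hL
      | cons g gs =>
          have hg : par g = q := ihL g (List.mem_cons_self)
          simp [par, hg]

theorem isWT_parity_unique {G : WT} {p q : Bool} (h1 : IsWT G p) (h2 : IsWT G q) : p = q := by
  rw [← par_eq_of_isWT h1, ← par_eq_of_isWT h2]

theorem isWT_add : ∀ (G X : WT) (p q : Bool), IsWT G p → IsWT X q → IsWT (G.add X) (xor p q)
  | node L R, int n, p, q, hG, hX => by
      obtain ⟨hL, hR, hLp, hRp⟩ := isWT_node_inv hG
      rw [add_node_left]
      have hpar : xor p q = !(xor (!p) q) := by cases p <;> cases q <;> rfl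
      rw [hpar]
      refine IsWT.node (by simp [lopts, hL]) (by simp [ropts, hR]) ?_ ?_
      · intro g hg
        simp only [lopts, List.map_nil, List.append_nil] at hg
        obtain ⟨g0, hg0, rfl⟩ := List.mem_map.1 hg
        have hsz := sizeOf_lt_node_left (R := R) hg0
        exact isWT_add g0 (int n) (!p) q (hLp g0 hg0) hX
      · intro g hg
        simp only [ropts, List.map_nil, List.append_nil] at hg
        obtain ⟨g0, hg0, rfl⟩ := List.mem_map.1 hg
        have hsz := sizeOf_lt_node_right (L := L) hg0
        exact isWT_add g0 (int n) (!p) q (hRp g0 hg0) hX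
  | node L R, node XL XR, p, q, hG, hX => by
      obtain ⟨hL, hR, hLp, hRp⟩ := isWT_node_inv hG
      obtain ⟨hL2, hR2, hXLp, hXRp⟩ := isWT_node_inv hX
      rw [add_node_left]
      have hpar : xor p q = !(xor (!p) q) := by cases p <;> cases q <;> rfl
      rw [hpar]
      refine IsWT.node (by simp [hL]) (by simp [hR]) ?_ ?_
      · intro g hg
        rcases List.mem_append.1 hg with hg | hg
        · obtain ⟨g0, hg0, rfl⟩ := List.mem_map.1 hg
          have hsz := sizeOf_lt_node_left (R := R) hg0
          exact isWT_add g0 (node XL XR) (!p) q (hLp g0 hg0) hX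
        · obtain ⟨x0, hx0, rfl⟩ := List.mem_map.1 hg
          simp only [lopts] at hx0
          have hsz := sizeOf_lt_node_left (R := XR) hx0
          have := isWT_add (node L R) x0 p (!q) hG (hXLp x0 hx0)
          have hx : xor p (!q) = xor (!p) q := by cases p <;> cases q <;> rfl
          rwa [hx] at this
      · intro g hg
        rcases List.mem_append.1 hg with hg | hg
        · obtain ⟨g0, hg0, rfl⟩ := List.mem_map.1 hg
          have hsz := sizeOf_lt_node_right (L := L) hg0
          exact isWT_add g0 (node XL XR) (!p) q (hRp g0 hg0) hX
        · obtain ⟨x0, hx0, rfl⟩ := List.mem_map.1 hg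
          simp only [ropts] at hx0
          have hsz := sizeOf_lt_node_right (L := XL) hx0
          have := isWT_add (node L R) x0 p (!q) hG (hXRp x0 hx0)
          have hx : xor p (!q) = xor (!p) q := by cases p <;> cases q <;> rfl
          rwa [hx] at this
  | int m, int n, p, q, hG, hX => by
      rw [add_int_int, isWT_int_inv hG, isWT_int_inv hX]
      exact IsWT.int (m+n)
  | int m, node XL XR, p, q, hG, hX => by
      obtain ⟨hL, hR, hLp, hRp⟩ := isWT_node_inv hX
      rw [add_node_right]
      rw [isWT_int_inv hG]
      have hpar : xor false q = !(!q) := by cases q <;> rfl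
      rw [hpar]
      have hGf : IsWT (int m) false := by rw [isWT_int_inv hG] at hG; exact hG
      refine IsWT.node (by simp [lopts, hL]) (by simp [ropts, hR]) ?_ ?_
      · intro g hg
        simp only [lopts, List.map_nil, List.nil_append] at hg
        obtain ⟨x0, hx0, rfl⟩ := List.mem_map.1 hg
        have hsz := sizeOf_lt_node_left (R := XR) hx0
        have := isWT_add (int m) x0 false (!q) hGf (hLp x0 hx0)
        simpa using this
      · intro g hg
        simp only [ropts, List.map_nil, List.nil_append] at hg
        obtain ⟨x0, hx0, rfl⟩ := List.mem_map.1 hg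
        have hsz := sizeOf_lt_node_right (L := XL) hx0
        have := isWT_add (int m) x0 false (!q) hGf (hRp x0 hx0)
        simpa using this
termination_by G X => sizeOf G + sizeOf X
decreasing_by all_goals omega

end WT
namespace WT

theorem Lf_int (n : ℤ) : Lf (int n) = n := by simp [Lf, par, Rout_int]
theorem Rf_int (n : ℤ) : Rf (int n) = n := by simp [Rf, par, Lout_int]

theorem Lf_node_odd {L R : List WT} (h : IsWT (node L R) true) :
    Lf (node L R) = lmax (L.map Lf) := by
  obtain ⟨hL, hR, hLp, hRp⟩ := isWT_node_inv h
  rw [Lf, par_eq_of_isWT h, if_pos rfl, Lout_node]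
  congr 1
  refine List.map_congr_left (fun g hg => ?_)
  simp [Lf, par_eq_of_isWT (hLp g hg)]

theorem Lf_node_even {L R : List WT} (h : IsWT (node L R) false) :
    Lf (node L R) = lmin (R.map Lf) := by
  obtain ⟨hL, hR, hLp, hRp⟩ := isWT_node_inv h
  rw [Lf, par_eq_of_isWT h, if_neg (by simp), Rout_node]
  congr 1
  refine List.map_congr_left (fun g hg => ?_)
  simp [Lf, par_eq_of_isWT (hRp g hg)]

theorem Rf_node_odd {L R : List WT} (h : IsWT (node L R) true) :
    Rf (node L R) = lmin (R.map Rf) := by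
  obtain ⟨hL, hR, hLp, hRp⟩ := isWT_node_inv h
  rw [Rf, par_eq_of_isWT h, if_pos rfl, Rout_node]
  congr 1
  refine List.map_congr_left (fun g hg => ?_)
  simp [Rf, par_eq_of_isWT (hRp g hg)]

theorem Rf_node_even {L R : List WT} (h : IsWT (node L R) false) :
    Rf (node L R) = lmax (L.map Rf) := by
  obtain ⟨hL, hR, hLp, hRp⟩ := isWT_node_inv h
  rw [Rf, par_eq_of_isWT h, if_neg (by simp), Lout_node]
  congr 1
  refine List.map_congr_left (fun g hg => ?_)
  simp [Rf, par_eq_of_isWT (hLp g hg)]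

theorem Lf_add_odd {G X : WT} {p q : Bool} (hG : IsWT G p) (hX : IsWT X q)
    (h : xor p q = true) :
    Lf (G.add X) = lmax ((G.lopts.map fun g => Lf (g.add X)) ++ (X.lopts.map fun x => Lf (G.add x))) := by
  have hs : IsWT (G.add X) true := h ▸ isWT_add G X p q hG hX
  cases G with
  | int m =>
      cases X with
      | int n => rw [isWT_int_inv hG, isWT_int_inv hX] at h; simp at h
      | node XL XR =>
          rw [add_node_right] at hs ⊢
          rw [Lf_node_odd hs]
          simp [lopts, List.map_map, Function.comp_def]
  | node L R =>
      rw [add_node_left] at hs ⊢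
      rw [Lf_node_odd hs]
      simp [lopts, List.map_map, Function.comp_def]

theorem Lf_add_even {G X : WT} {p q : Bool} (hG : IsWT G p) (hX : IsWT X q)
    (h : xor p q = false) (hn : (∃ L R, G = node L R) ∨ (∃ L R, X = node L R)) :
    Lf (G.add X) = lmin ((G.ropts.map fun g => Lf (g.add X)) ++ (X.ropts.map fun x => Lf (G.add x))) := by
  have hs : IsWT (G.add X) false := h ▸ isWT_add G X p q hG hX
  cases G with
  | int m =>
      cases X with
      | int n =>
          exfalso; rcases hn with ⟨_, _, h2⟩ | ⟨_, _, h2⟩ <;> cases h2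
      | node XL XR =>
          rw [add_node_right] at hs ⊢
          rw [Lf_node_even hs]
          simp [ropts, List.map_map, Function.comp_def]
  | node L R =>
      rw [add_node_left] at hs ⊢
      rw [Lf_node_even hs]
      simp [ropts, List.map_map, Function.comp_def]

theorem Rf_add_odd {G X : WT} {p q : Bool} (hG : IsWT G p) (hX : IsWT X q)
    (h : xor p q = true) :
    Rf (G.add X) = lmin ((G.ropts.map fun g => Rf (g.add X)) ++ (X.ropts.map fun x => Rf (G.add x))) := by
  have hs : IsWT (G.add X) true := h ▸ isWT_add G X p q hG hX
  cases G with
  | int m =>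
      cases X with
      | int n => rw [isWT_int_inv hG, isWT_int_inv hX] at h; simp at h
      | node XL XR =>
          rw [add_node_right] at hs ⊢
          rw [Rf_node_odd hs]
          simp [ropts, List.map_map, Function.comp_def]
  | node L R =>
      rw [add_node_left] at hs ⊢
      rw [Rf_node_odd hs]
      simp [ropts, List.map_map, Function.comp_def]

theorem Rf_add_even {G X : WT} {p q : Bool} (hG : IsWT G p) (hX : IsWT X q)
    (h : xor p q = false) (hn : (∃ L R, G = node L R) ∨ (∃ L R, X = node L R)) :
    Rf (G.add X) = lmax ((G.lopts.map fun g => Rf (g.add X)) ++ (X.lopts.map fun x => Rf (G.add x))) := by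
  have hs : IsWT (G.add X) false := h ▸ isWT_add G X p q hG hX
  cases G with
  | int m =>
      cases X with
      | int n =>
          exfalso; rcases hn with ⟨_, _, h2⟩ | ⟨_, _, h2⟩ <;> cases h2
      | node XL XR =>
          rw [add_node_right] at hs ⊢
          rw [Rf_node_even hs]
          simp [lopts, List.map_map, Function.comp_def]
  | node L R =>
      rw [add_node_left] at hs ⊢
      rw [Rf_node_even hs]
      simp [lopts, List.map_map, Function.comp_def]

private theorem foldl_max_add (l : List ℤ) : ∀ x n : ℤ, (l.map (fun a => n + a)).foldl max (n+x) = n + l.foldl max x := by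
  induction l with
  | nil => intro x n; rfl
  | cons y ys ih =>
      intro x n
      simp only [List.map_cons, List.foldl_cons]
      rw [max_add_add_left n x y]
      exact ih (max x y) n

private theorem foldl_min_add (l : List ℤ) : ∀ x n : ℤ, (l.map (fun a => n + a)).foldl min (n+x) = n + l.foldl min x := by
  induction l with
  | nil => intro x n; rfl
  | cons y ys ih =>
      intro x n
      simp only [List.map_cons, List.foldl_cons]
      rw [min_add_add_left n x y]
      exact ih (min x y) n

theorem lmax_map_add {l : List ℤ} (h : l ≠ []) (n : ℤ) :
    lmax (l.map (fun a => n + a)) = n + lmax l := by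
  cases l with
  | nil => exact absurd rfl h
  | cons x xs => rw [List.map_cons, lmax, lmax]; exact foldl_max_add xs x n

theorem lmin_map_add {l : List ℤ} (h : l ≠ []) (n : ℤ) :
    lmin (l.map (fun a => n + a)) = n + lmin l := by
  cases l with
  | nil => exact absurd rfl h
  | cons x xs => rw [List.map_cons, lmin, lmin]; exact foldl_min_add xs x n

end WT
namespace WT

theorem Lf_int_add : ∀ (X : WT) (q : Bool) (n : ℤ), IsWT X q → Lf ((int n).add X) = n + Lf X
  | int m, q, n, hX => by rw [add_int_int, Lf_int, Lf_int]
  | node XL XR, q, n, hX => by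
      obtain ⟨hL, hR, hLp, hRp⟩ := isWT_node_inv hX
      have hq : q = !(!q) := by simp
      cases q with
      | true =>
          rw [Lf_add_odd (IsWT.int n) hX rfl]
          simp only [lopts, List.map_nil, List.nil_append]
          have heq : XL.map (fun x => Lf ((int n).add x)) = (XL.map Lf).map (fun a => n + a) := by
            rw [List.map_map]
            refine List.map_congr_left (fun x hx => ?_)
            have hsz := sizeOf_lt_node_left (R := XR) hx
            have := Lf_int_add x (!true) n (hLp x hx)
            simpa using this
          rw [heq, lmax_map_add (by simp [hL]), ← Lf_node_odd hX]
      | false =>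
          rw [Lf_add_even (IsWT.int n) hX rfl (Or.inr ⟨XL, XR, rfl⟩)]
          simp only [ropts, List.map_nil, List.nil_append]
          have heq : XR.map (fun x => Lf ((int n).add x)) = (XR.map Lf).map (fun a => n + a) := by
            rw [List.map_map]
            refine List.map_congr_left (fun x hx => ?_)
            have hsz := sizeOf_lt_node_right (L := XL) hx
            have := Lf_int_add x (!false) n (hRp x hx)
            simpa using this
          rw [heq, lmin_map_add (by simp [hR]), ← Lf_node_even hX]
termination_by X => sizeOf X
decreasing_by all_goals omega

theorem Rf_int_add : ∀ (X : WT) (q : Bool) (n : ℤ), IsWT X q → Rf ((int n).add X) = n + Rf X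
  | int m, q, n, hX => by rw [add_int_int, Rf_int, Rf_int]
  | node XL XR, q, n, hX => by
      obtain ⟨hL, hR, hLp, hRp⟩ := isWT_node_inv hX
      cases q with
      | true =>
          rw [Rf_add_odd (IsWT.int n) hX rfl]
          simp only [ropts, List.map_nil, List.nil_append]
          have heq : XR.map (fun x => Rf ((int n).add x)) = (XR.map Rf).map (fun a => n + a) := by
            rw [List.map_map]
            refine List.map_congr_left (fun x hx => ?_)
            have hsz := sizeOf_lt_node_right (L := XL) hx
            have := Rf_int_add x (!true) n (hRp x hx)
            simpa using this
          rw [heq, lmin_map_add (by simp [hR]), ← Rf_node_odd hX]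
      | false =>
          rw [Rf_add_even (IsWT.int n) hX rfl (Or.inr ⟨XL, XR, rfl⟩)]
          simp only [lopts, List.map_nil, List.nil_append]
          have heq : XL.map (fun x => Rf ((int n).add x)) = (XL.map Rf).map (fun a => n + a) := by
            rw [List.map_map]
            refine List.map_congr_left (fun x hx => ?_)
            have hsz := sizeOf_lt_node_left (R := XR) hx
            have := Rf_int_add x (!false) n (hLp x hx)
            simpa using this
          rw [heq, lmax_map_add (by simp [hL]), ← Rf_node_even hX]
termination_by X => sizeOf X
decreasing_by all_goals omega

end WT
namespace WT

theorem AB : ∀ (G X : WT) (p q : Bool), IsWT G p → IsWT X q →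
    (p = false → Rout G + Lf X ≤ Lf (G.add X)) ∧
    (p = true → q = false → Lout G + Lf X ≤ Lf (G.add X))
  | int m, X, p, q, hG, hX => by
      constructor
      · intro _
        rw [Lf_int_add X q m hX, Rout_int]
      · intro hp _
        rw [isWT_int_inv hG] at hp; cases hp
  | node L R, int k, p, q, hG, hX => by
      obtain ⟨hL, hR, hLp, hRp⟩ := isWT_node_inv hG
      have hq : q = false := isWT_int_inv hX
      subst hq
      constructor
      · rintro rfl
        rw [Lf_add_even hG hX rfl (Or.inl ⟨L, R, rfl⟩)]
        refine le_lmin (by simp [ropts, hR]) ?_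
        intro a ha
        simp only [ropts, List.map_nil, List.append_nil] at ha
        obtain ⟨g, hg, rfl⟩ := List.mem_map.1 ha
        have hsz := sizeOf_lt_node_right (L := L) hg
        have h1 := (AB g (int k) true false (by simpa using hRp g hg) hX).2 rfl rfl
        have h2 : Rout (node L R) ≤ Lout g := by
          rw [Rout_node]
          exact lmin_le_of_mem (List.mem_map.2 ⟨g, hg, rfl⟩)
        omega
      · rintro rfl -
        rw [Lf_add_odd hG hX rfl]
        have hmem := lmax_mem (l := L.map Rout) (by simp [hL])
        obtain ⟨g, hg, hgval⟩ := List.mem_map.1 hmem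
        have hsz := sizeOf_lt_node_left (R := R) hg
        have h1 := (AB g (int k) false false (by simpa using hLp g hg) hX).1 rfl
        refine le_trans ?_ (le_lmax_of_mem (List.mem_append_left _
          (List.mem_map.2 ⟨g, (by simpa [lopts] using hg), rfl⟩)))
        rw [Lout_node, ← hgval]
        exact h1
  | node L R, node XL XR, p, q, hG, hX => by
      obtain ⟨hL, hR, hLp, hRp⟩ := isWT_node_inv hG
      obtain ⟨hXL, hXR, hXLp, hXRp⟩ := isWT_node_inv hX
      constructor
      · rintro rfl
        cases q with
        | true =>
            rw [Lf_add_odd hG hX rfl]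
            rw [Lf_node_odd hX]
            have hmem := lmax_mem (l := XL.map Lf) (by simp [hXL])
            obtain ⟨x, hx, hxval⟩ := List.mem_map.1 hmem
            have hsz := sizeOf_lt_node_left (R := XR) hx
            have h1 := (AB (node L R) x false false hG (by simpa using hXLp x hx)).1 rfl
            refine le_trans ?_ (le_lmax_of_mem (List.mem_append_right _
              (List.mem_map.2 ⟨x, (by simpa [lopts] using hx), rfl⟩)))
            rw [← hxval]
            exact h1
        | false =>
            rw [Lf_add_even hG hX rfl (Or.inl ⟨L, R, rfl⟩)]
            refine le_lmin (by simp [ropts, hR]) ?_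
            intro a ha
            rcases List.mem_append.1 ha with ha | ha
            · obtain ⟨g, hg, rfl⟩ := List.mem_map.1 ha
              simp only [ropts] at hg
              have hsz := sizeOf_lt_node_right (L := L) hg
              have h1 := (AB g (node XL XR) true false (by simpa using hRp g hg) hX).2 rfl rfl
              have h2 : Rout (node L R) ≤ Lout g := by
                rw [Rout_node]
                exact lmin_le_of_mem (List.mem_map.2 ⟨g, hg, rfl⟩)
              omega
            · obtain ⟨x, hx, rfl⟩ := List.mem_map.1 ha
              simp only [ropts] at hx
              have hsz := sizeOf_lt_node_right (L := XL) hx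
              have h1 := (AB (node L R) x false true hG (by simpa using hXRp x hx)).1 rfl
              have h2 : Lf (node XL XR) ≤ Lf x := by
                rw [Lf_node_even hX]
                exact lmin_le_of_mem (List.mem_map.2 ⟨x, hx, rfl⟩)
              omega
      · rintro rfl rfl
        rw [Lf_add_odd hG hX rfl]
        have hmem := lmax_mem (l := L.map Rout) (by simp [hL])
        obtain ⟨g, hg, hgval⟩ := List.mem_map.1 hmem
        have hsz := sizeOf_lt_node_left (R := R) hg
        have h1 := (AB g (node XL XR) false false (by simpa using hLp g hg) hX).1 rfl
        refine le_trans ?_ (le_lmax_of_mem (List.mem_append_left _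
          (List.mem_map.2 ⟨g, (by simpa [lopts] using hg), rfl⟩)))
        rw [Lout_node, ← hgval]
        exact h1
termination_by G X => sizeOf G + sizeOf X
decreasing_by all_goals omega

end WT
namespace WT

theorem ABr : ∀ (G X : WT) (p q : Bool), IsWT G p → IsWT X q →
    (p = false → Rf (G.add X) ≤ Lout G + Rf X) ∧
    (p = true → q = false → Rf (G.add X) ≤ Rout G + Rf X)
  | int m, X, p, q, hG, hX => by
      constructor
      · intro _
        rw [Rf_int_add X q m hX, Lout_int]
      · intro hp _
        rw [isWT_int_inv hG] at hp; cases hp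
  | node L R, int k, p, q, hG, hX => by
      obtain ⟨hL, hR, hLp, hRp⟩ := isWT_node_inv hG
      have hq : q = false := isWT_int_inv hX
      subst hq
      constructor
      · rintro rfl
        rw [Rf_add_even hG hX rfl (Or.inl ⟨L, R, rfl⟩)]
        refine lmax_le (by simp [lopts, hL]) ?_
        intro a ha
        simp only [lopts, List.map_nil, List.append_nil] at ha
        obtain ⟨g, hg, rfl⟩ := List.mem_map.1 ha
        have hsz := sizeOf_lt_node_left (R := R) hg
        have h1 := (ABr g (int k) true false (by simpa using hLp g hg) hX).2 rfl rfl
        have h2 : Rout g ≤ Lout (node L R) := by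
          rw [Lout_node]
          exact le_lmax_of_mem (List.mem_map.2 ⟨g, hg, rfl⟩)
        omega
      · rintro rfl -
        rw [Rf_add_odd hG hX rfl]
        have hmem := lmin_mem (l := R.map Lout) (by simp [hR])
        obtain ⟨g, hg, hgval⟩ := List.mem_map.1 hmem
        have hsz := sizeOf_lt_node_right (L := L) hg
        have h1 := (ABr g (int k) false false (by simpa using hRp g hg) hX).1 rfl
        refine le_trans (lmin_le_of_mem (List.mem_append_left _
          (List.mem_map.2 ⟨g, (by simpa [ropts] using hg), rfl⟩))) ?_
        rw [Rout_node, ← hgval]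
        exact h1
  | node L R, node XL XR, p, q, hG, hX => by
      obtain ⟨hL, hR, hLp, hRp⟩ := isWT_node_inv hG
      obtain ⟨hXL, hXR, hXLp, hXRp⟩ := isWT_node_inv hX
      constructor
      · rintro rfl
        cases q with
        | true =>
            rw [Rf_add_odd hG hX rfl]
            rw [Rf_node_odd hX]
            have hmem := lmin_mem (l := XR.map Rf) (by simp [hXR])
            obtain ⟨x, hx, hxval⟩ := List.mem_map.1 hmem
            have hsz := sizeOf_lt_node_right (L := XL) hx
            have h1 := (ABr (node L R) x false false hG (by simpa using hXRp x hx)).1 rfl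
            refine le_trans (lmin_le_of_mem (List.mem_append_right _
              (List.mem_map.2 ⟨x, (by simpa [ropts] using hx), rfl⟩))) ?_
            rw [← hxval]
            exact h1
        | false =>
            rw [Rf_add_even hG hX rfl (Or.inl ⟨L, R, rfl⟩)]
            refine lmax_le (by simp [lopts, hL]) ?_
            intro a ha
            rcases List.mem_append.1 ha with ha | ha
            · obtain ⟨g, hg, rfl⟩ := List.mem_map.1 ha
              simp only [lopts] at hg
              have hsz := sizeOf_lt_node_left (R := R) hg
              have h1 := (ABr g (node XL XR) true false (by simpa using hLp g hg) hX).2 rfl rfl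
              have h2 : Rout g ≤ Lout (node L R) := by
                rw [Lout_node]
                exact le_lmax_of_mem (List.mem_map.2 ⟨g, hg, rfl⟩)
              omega
            · obtain ⟨x, hx, rfl⟩ := List.mem_map.1 ha
              simp only [lopts] at hx
              have hsz := sizeOf_lt_node_left (R := XR) hx
              have h1 := (ABr (node L R) x false true hG (by simpa using hXLp x hx)).1 rfl
              have h2 : Rf x ≤ Rf (node XL XR) := by
                rw [Rf_node_even hX]
                exact le_lmax_of_mem (List.mem_map.2 ⟨x, hx, rfl⟩)
              omega
      · rintro rfl rfl
        rw [Rf_add_odd hG hX rfl]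
        have hmem := lmin_mem (l := R.map Lout) (by simp [hR])
        obtain ⟨g, hg, hgval⟩ := List.mem_map.1 hmem
        have hsz := sizeOf_lt_node_right (L := L) hg
        have h1 := (ABr g (node XL XR) false false (by simpa using hRp g hg) hX).1 rfl
        refine le_trans (lmin_le_of_mem (List.mem_append_left _
          (List.mem_map.2 ⟨g, (by simpa [ropts] using hg), rfl⟩))) ?_
        rw [Rout_node, ← hgval]
        exact h1
termination_by G X => sizeOf G + sizeOf X
decreasing_by all_goals omega

end WT
namespace WT

theorem isWT_star (r : ℤ) : IsWT (node [int r] [int r]) true := by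
  have h := IsWT.node (L := [int r]) (R := [int r]) (p := false) (by simp) (by simp)
    (by intro g hg; simp at hg; subst hg; exact IsWT.int r)
    (by intro g hg; simp at hg; subst hg; exact IsWT.int r)
  simpa using h

theorem Rout_star (r : ℤ) : Rout (node [int r] [int r]) = r := by
  rw [Rout_node]; simp [Lout_int]; rfl
theorem Lout_star (r : ℤ) : Lout (node [int r] [int r]) = r := by
  rw [Lout_node]; simp [Rout_int]; rfl

theorem lf_star_add_le {Y : WT} {q : Bool} (hY : IsWT Y q) (hq : q = true) (r : ℤ) :
    Lf ((node [int r] [int r]).add Y) ≤ r + Lf Y := by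
  subst hq
  rw [Lf_add_even (isWT_star r) hY rfl (Or.inl ⟨_, _, rfl⟩)]
  refine le_trans (lmin_le_of_mem (List.mem_append_left _ ?_)) (le_of_eq (Lf_int_add Y true r hY))
  simp [ropts]

theorem le_rf_star_add {Y : WT} {q : Bool} (hY : IsWT Y q) (hq : q = true) (l : ℤ) :
    l + Rf Y ≤ Rf ((node [int l] [int l]).add Y) := by
  subst hq
  rw [Rf_add_even (isWT_star l) hY rfl (Or.inl ⟨_, _, rfl⟩)]
  refine le_trans (le_of_eq (Rf_int_add Y true l hY).symm) (le_lmax_of_mem (List.mem_append_left _ ?_))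
  simp [lopts]

theorem isWT_addLeftStar {L R : List WT} (hC : IsWT (node L R) false) (r : ℤ) :
    IsWT (node (L ++ [node [int r] [int r]]) R) false := by
  obtain ⟨hL, hR, hLp, hRp⟩ := isWT_node_inv hC
  have h := IsWT.node (L := L ++ [node [int r] [int r]]) (R := R) (p := true)
    (by simp) (by simpa using hR)
    (by intro g hg
        rcases List.mem_append.1 hg with hg | hg
        · simpa using hLp g hg
        · simp at hg; subst hg; exact isWT_star r)
    (by intro g hg; simpa using hRp g hg)
  simpa using h

theorem isWT_addRightStar {L R : List WT} (hC : IsWT (node L R) false) (l : ℤ) :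
    IsWT (node L (R ++ [node [int l] [int l]])) false := by
  obtain ⟨hL, hR, hLp, hRp⟩ := isWT_node_inv hC
  have h := IsWT.node (L := L) (R := R ++ [node [int l] [int l]]) (p := true)
    (by simpa using hL) (by simp)
    (by intro g hg; simpa using hLp g hg)
    (by intro g hg
        rcases List.mem_append.1 hg with hg | hg
        · simpa using hRp g hg
        · simp at hg; subst hg; exact isWT_star l)
  simpa using h

theorem addLeftStar : ∀ (Y : WT) (L R : List WT) (q : Bool), IsWT (node L R) false → IsWT Y q →
    Lf ((node (L ++ [node [int (Rout (node L R))] [int (Rout (node L R))]]) R).add Y) =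
      Lf ((node L R).add Y)
  | int k, L, R, q, hC, hY => by
      have hq : q = false := isWT_int_inv hY
      subst hq
      rw [Lf_add_even (isWT_addLeftStar hC _) hY rfl (Or.inl ⟨_, _, rfl⟩),
          Lf_add_even hC hY rfl (Or.inl ⟨_, _, rfl⟩)]
      simp [ropts, lopts]
  | node YL YR, L, R, q, hC, hY => by
      obtain ⟨hL, hR, hLp, hRp⟩ := isWT_node_inv hC
      obtain ⟨hYL, hYR, hYLp, hYRp⟩ := isWT_node_inv hY
      set r := Rout (node L R) with hr
      have hC2 := isWT_addLeftStar hC r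
      cases q with
      | true =>
          rw [Lf_add_odd hC2 hY rfl, Lf_add_odd hC hY rfl]
          simp only [lopts]
          refine lmax_eq_lmax (by simp) (by simp [hL]) ?_ ?_
          · intro a ha
            rcases List.mem_append.1 ha with ha | ha
            · obtain ⟨g, hg, rfl⟩ := List.mem_map.1 ha
              rcases List.mem_append.1 hg with hg | hg
              · exact le_lmax_of_mem (List.mem_append_left _ (List.mem_map.2 ⟨g, hg, rfl⟩))
              · simp at hg; subst hg
                have h1 := lf_star_add_le hY rfl r
                have h2 := (AB (node L R) (node YL YR) false true hC hY).1 rfl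
                have h3 : Lf ((node L R).add (node YL YR)) =
                    lmax ((L.map fun g => Lf (g.add (node YL YR))) ++
                      (YL.map fun y => Lf ((node L R).add y))) := by
                  rw [Lf_add_odd hC hY rfl]; simp only [lopts]
                rw [← h3]
                omega
            · obtain ⟨y, hy, rfl⟩ := List.mem_map.1 ha
              have hsz := sizeOf_lt_node_left (R := YR) hy
              rw [addLeftStar y L R false hC (by simpa using hYLp y hy)]
              exact le_lmax_of_mem (List.mem_append_right _ (List.mem_map.2 ⟨y, hy, rfl⟩))
          · intro b hb
            rcases List.mem_append.1 hb with hb | hb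
            · obtain ⟨g, hg, rfl⟩ := List.mem_map.1 hb
              exact le_lmax_of_mem (List.mem_append_left _
                (List.mem_map.2 ⟨g, List.mem_append_left _ hg, rfl⟩))
            · obtain ⟨y, hy, rfl⟩ := List.mem_map.1 hb
              have hsz := sizeOf_lt_node_left (R := YR) hy
              rw [← addLeftStar y L R false hC (by simpa using hYLp y hy)]
              exact le_lmax_of_mem (List.mem_append_right _ (List.mem_map.2 ⟨y, hy, rfl⟩))
      | false =>
          rw [Lf_add_even hC2 hY rfl (Or.inl ⟨_, _, rfl⟩),
              Lf_add_even hC hY rfl (Or.inl ⟨_, _, rfl⟩)]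
          simp only [ropts]
          refine lmin_eq_lmin (by simp [hR]) (by simp [hR]) ?_ ?_
          · intro a ha
            rcases List.mem_append.1 ha with ha | ha
            · obtain ⟨g, hg, rfl⟩ := List.mem_map.1 ha
              exact lmin_le_of_mem (List.mem_append_left _ (List.mem_map.2 ⟨g, hg, rfl⟩))
            · obtain ⟨y, hy, rfl⟩ := List.mem_map.1 ha
              have hsz := sizeOf_lt_node_right (L := YL) hy
              rw [addLeftStar y L R true hC (by simpa using hYRp y hy)]
              exact lmin_le_of_mem (List.mem_append_right _ (List.mem_map.2 ⟨y, hy, rfl⟩))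
          · intro b hb
            rcases List.mem_append.1 hb with hb | hb
            · obtain ⟨g, hg, rfl⟩ := List.mem_map.1 hb
              exact lmin_le_of_mem (List.mem_append_left _ (List.mem_map.2 ⟨g, hg, rfl⟩))
            · obtain ⟨y, hy, rfl⟩ := List.mem_map.1 hb
              have hsz := sizeOf_lt_node_right (L := YL) hy
              rw [← addLeftStar y L R true hC (by simpa using hYRp y hy)]
              exact lmin_le_of_mem (List.mem_append_right _ (List.mem_map.2 ⟨y, hy, rfl⟩))
termination_by Y => sizeOf Y
decreasing_by all_goals omega

theorem addRightStar : ∀ (Y : WT) (L R : List WT) (q : Bool), IsWT (node L R) false → IsWT Y q →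
    Rf ((node L (R ++ [node [int (Lout (node L R))] [int (Lout (node L R))]])).add Y) =
      Rf ((node L R).add Y)
  | int k, L, R, q, hC, hY => by
      have hq : q = false := isWT_int_inv hY
      subst hq
      rw [Rf_add_even (isWT_addRightStar hC _) hY rfl (Or.inl ⟨_, _, rfl⟩),
          Rf_add_even hC hY rfl (Or.inl ⟨_, _, rfl⟩)]
      simp [ropts, lopts]
  | node YL YR, L, R, q, hC, hY => by
      obtain ⟨hL, hR, hLp, hRp⟩ := isWT_node_inv hC
      obtain ⟨hYL, hYR, hYLp, hYRp⟩ := isWT_node_inv hY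
      set l := Lout (node L R) with hl
      have hC2 := isWT_addRightStar hC l
      cases q with
      | true =>
          rw [Rf_add_odd hC2 hY rfl, Rf_add_odd hC hY rfl]
          simp only [ropts]
          refine lmin_eq_lmin (by simp) (by simp [hR]) ?_ ?_
          · intro a ha
            rcases List.mem_append.1 ha with ha | ha
            · obtain ⟨g, hg, rfl⟩ := List.mem_map.1 ha
              rcases List.mem_append.1 hg with hg | hg
              · exact lmin_le_of_mem (List.mem_append_left _ (List.mem_map.2 ⟨g, hg, rfl⟩))
              · simp at hg; subst hg
                have h1 := le_rf_star_add hY rfl l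
                have h2 := (ABr (node L R) (node YL YR) false true hC hY).1 rfl
                have h3 : Rf ((node L R).add (node YL YR)) =
                    lmin ((R.map fun g => Rf (g.add (node YL YR))) ++
                      (YR.map fun y => Rf ((node L R).add y))) := by
                  rw [Rf_add_odd hC hY rfl]; simp only [ropts]
                rw [← h3]
                omega
            · obtain ⟨y, hy, rfl⟩ := List.mem_map.1 ha
              have hsz := sizeOf_lt_node_right (L := YL) hy
              rw [addRightStar y L R false hC (by simpa using hYRp y hy)]
              exact lmin_le_of_mem (List.mem_append_right _ (List.mem_map.2 ⟨y, hy, rfl⟩))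
          · intro b hb
            rcases List.mem_append.1 hb with hb | hb
            · obtain ⟨g, hg, rfl⟩ := List.mem_map.1 hb
              exact lmin_le_of_mem (List.mem_append_left _
                (List.mem_map.2 ⟨g, List.mem_append_left _ hg, rfl⟩))
            · obtain ⟨y, hy, rfl⟩ := List.mem_map.1 hb
              have hsz := sizeOf_lt_node_right (L := YL) hy
              rw [← addRightStar y L R false hC (by simpa using hYRp y hy)]
              exact lmin_le_of_mem (List.mem_append_right _ (List.mem_map.2 ⟨y, hy, rfl⟩))
      | false =>
          rw [Rf_add_even hC2 hY rfl (Or.inl ⟨_, _, rfl⟩),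
              Rf_add_even hC hY rfl (Or.inl ⟨_, _, rfl⟩)]
          simp only [lopts]
          refine lmax_eq_lmax (by simp [hL]) (by simp [hL]) ?_ ?_
          · intro a ha
            rcases List.mem_append.1 ha with ha | ha
            · obtain ⟨g, hg, rfl⟩ := List.mem_map.1 ha
              exact le_lmax_of_mem (List.mem_append_left _ (List.mem_map.2 ⟨g, hg, rfl⟩))
            · obtain ⟨y, hy, rfl⟩ := List.mem_map.1 ha
              have hsz := sizeOf_lt_node_left (R := YR) hy
              rw [addRightStar y L R true hC (by simpa using hYLp y hy)]
              exact le_lmax_of_mem (List.mem_append_right _ (List.mem_map.2 ⟨y, hy, rfl⟩))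
          · intro b hb
            rcases List.mem_append.1 hb with hb | hb
            · obtain ⟨g, hg, rfl⟩ := List.mem_map.1 hb
              exact le_lmax_of_mem (List.mem_append_left _ (List.mem_map.2 ⟨g, hg, rfl⟩))
            · obtain ⟨y, hy, rfl⟩ := List.mem_map.1 hb
              have hsz := sizeOf_lt_node_left (R := YR) hy
              rw [← addRightStar y L R true hC (by simpa using hYLp y hy)]
              exact le_lmax_of_mem (List.mem_append_right _ (List.mem_map.2 ⟨y, hy, rfl⟩))
termination_by Y => sizeOf Y
decreasing_by all_goals omega

end WT
namespace WT

def up : WT → WT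
  | int n => int n
  | node L R =>
      let L' := (node L R).lopts.attach.map fun g => up g.1
      let R' := (node L R).ropts.attach.map fun g => up g.1
      if par (node L R) then node L' R'
      else node (L' ++ [node [int (Rout (node L' R'))] [int (Rout (node L' R'))]]) R'
termination_by G => sizeOf G
decreasing_by
  all_goals
    first
      | exact sizeOf_lt_of_mem_lopts g.2
      | exact sizeOf_lt_of_mem_ropts g.2

def down : WT → WT
  | int n => int n
  | node L R =>
      let L' := (node L R).lopts.attach.map fun g => down g.1
      let R' := (node L R).ropts.attach.map fun g => down g.1
      if par (node L R) then node L' R'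
      else node L' (R' ++ [node [int (Lout (node L' R'))] [int (Lout (node L' R'))]])
termination_by G => sizeOf G
decreasing_by
  all_goals
    first
      | exact sizeOf_lt_of_mem_lopts g.2
      | exact sizeOf_lt_of_mem_ropts g.2

theorem up_int (n : ℤ) : up (int n) = int n := by rw [up]

theorem up_node (L R : List WT) : up (node L R) =
    if par (node L R) then node (L.map up) (R.map up)
    else node ((L.map up) ++
        [node [int (Rout (node (L.map up) (R.map up)))] [int (Rout (node (L.map up) (R.map up)))]])
      (R.map up) := by
  rw [up]
  simp only [lopts, ropts, List.attach_map_val]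

theorem down_int (n : ℤ) : down (int n) = int n := by rw [down]

theorem down_node (L R : List WT) : down (node L R) =
    if par (node L R) then node (L.map down) (R.map down)
    else node (L.map down) ((R.map down) ++
        [node [int (Lout (node (L.map down) (R.map down)))] [int (Lout (node (L.map down) (R.map down)))]]) := by
  rw [down]
  simp only [lopts, ropts, List.attach_map_val]

theorem isWT_up : ∀ (G : WT) (p : Bool), IsWT G p → IsWT (up G) p
  | int n, p, hG => by rw [up_int]; exact hG
  | node L R, p, hG => by
      obtain ⟨hL, hR, hLp, hRp⟩ := isWT_node_inv hG
      have hcore : IsWT (node (L.map up) (R.map up)) p := by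
        have h := IsWT.node (L := L.map up) (R := R.map up) (p := !p)
          (by simp [hL]) (by simp [hR])
          (by intro g hg
              obtain ⟨g0, hg0, rfl⟩ := List.mem_map.1 hg
              have hsz := sizeOf_lt_node_left (R := R) hg0
              exact isWT_up g0 (!p) (hLp g0 hg0))
          (by intro g hg
              obtain ⟨g0, hg0, rfl⟩ := List.mem_map.1 hg
              have hsz := sizeOf_lt_node_right (L := L) hg0
              exact isWT_up g0 (!p) (hRp g0 hg0))
        simpa using h
      rw [up_node, par_eq_of_isWT hG]
      cases p with
      | true => simpa using hcore
      | false => simpa using isWT_addLeftStar hcore _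
termination_by G => sizeOf G
decreasing_by all_goals omega

theorem isWT_down : ∀ (G : WT) (p : Bool), IsWT G p → IsWT (down G) p
  | int n, p, hG => by rw [down_int]; exact hG
  | node L R, p, hG => by
      obtain ⟨hL, hR, hLp, hRp⟩ := isWT_node_inv hG
      have hcore : IsWT (node (L.map down) (R.map down)) p := by
        have h := IsWT.node (L := L.map down) (R := R.map down) (p := !p)
          (by simp [hL]) (by simp [hR])
          (by intro g hg
              obtain ⟨g0, hg0, rfl⟩ := List.mem_map.1 hg
              have hsz := sizeOf_lt_node_left (R := R) hg0
              exact isWT_down g0 (!p) (hLp g0 hg0))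
          (by intro g hg
              obtain ⟨g0, hg0, rfl⟩ := List.mem_map.1 hg
              have hsz := sizeOf_lt_node_right (L := L) hg0
              exact isWT_down g0 (!p) (hRp g0 hg0))
        simpa using h
      rw [down_node, par_eq_of_isWT hG]
      cases p with
      | true => simpa using hcore
      | false => simpa using isWT_addRightStar hcore _
termination_by G => sizeOf G
decreasing_by all_goals omega

end WT
namespace WT

theorem up_Lf : ∀ (G X : WT) (p q : Bool), IsWT G p → IsWT X q → Lf ((up G).add X) = Lf (G.add X)
  | int n, X, p, q, hG, hX => by rw [up_int]
  | node L R, X, p, q, hG, hX => by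
      obtain ⟨hL, hR, hLp, hRp⟩ := isWT_node_inv hG
      have hpar := par_eq_of_isWT hG
      have hC' : IsWT (node (L.map up) (R.map up)) p := by
        have h := IsWT.node (L := L.map up) (R := R.map up) (p := !p)
          (by simp [hL]) (by simp [hR])
          (by intro g hg
              obtain ⟨g0, hg0, rfl⟩ := List.mem_map.1 hg
              exact isWT_up g0 (!p) (hLp g0 hg0))
          (by intro g hg
              obtain ⟨g0, hg0, rfl⟩ := List.mem_map.1 hg
              exact isWT_up g0 (!p) (hRp g0 hg0))
        simpa using h
      have hstep : ∀ x (qx : Bool), IsWT x qx → sizeOf x < sizeOf X →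
          Lf ((node (L.map up) (R.map up)).add x) = Lf ((node L R).add x) := by
        intro x qx hx hsz
        have e1 := up_Lf (node L R) x p qx hG hx
        cases p with
        | true =>
            have hup : up (node L R) = node (L.map up) (R.map up) := by
              rw [up_node, hpar]; rfl
            rw [hup] at e1; exact e1
        | false =>
            have hup : up (node L R) = node ((L.map up) ++
                [node [int (Rout (node (L.map up) (R.map up)))]
                      [int (Rout (node (L.map up) (R.map up)))]]) (R.map up) := by
              rw [up_node, hpar]; rfl
            rw [hup] at e1
            rw [← addLeftStar x (L.map up) (R.map up) qx hC' hx]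
            exact e1
      have hmain : Lf ((node (L.map up) (R.map up)).add X) = Lf ((node L R).add X) := by
        cases hxq : xor p q with
        | true =>
            rw [Lf_add_odd hC' hX hxq, Lf_add_odd hG hX hxq]
            simp only [lopts]
            congr 1
            congr 1
            · rw [List.map_map]
              refine List.map_congr_left (fun g hg => ?_)
              have hsz := sizeOf_lt_node_left (R := R) hg
              exact up_Lf g X (!p) q (hLp g hg) hX
            · refine List.map_congr_left (fun x hx => ?_)
              cases X with
              | int k => simp [lopts] at hx
              | node XL XR =>
                  simp only [lopts] at hx
                  obtain ⟨hXL, hXR, hXLp, hXRp⟩ := isWT_node_inv hX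
                  exact hstep x (!q) (hXLp x hx) (sizeOf_lt_node_left (R := XR) hx)
        | false =>
            rw [Lf_add_even hC' hX hxq (Or.inl ⟨_, _, rfl⟩),
                Lf_add_even hG hX hxq (Or.inl ⟨_, _, rfl⟩)]
            simp only [ropts]
            congr 1
            congr 1
            · rw [List.map_map]
              refine List.map_congr_left (fun g hg => ?_)
              have hsz := sizeOf_lt_node_right (L := L) hg
              exact up_Lf g X (!p) q (hRp g hg) hX
            · refine List.map_congr_left (fun x hx => ?_)
              cases X with
              | int k => simp [ropts] at hx
              | node XL XR =>
                  simp only [ropts] at hx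
                  obtain ⟨hXL, hXR, hXLp, hXRp⟩ := isWT_node_inv hX
                  exact hstep x (!q) (hXRp x hx) (sizeOf_lt_node_right (L := XL) hx)
      cases p with
      | true =>
          have hup : up (node L R) = node (L.map up) (R.map up) := by
            rw [up_node, hpar]; rfl
          rw [hup]; exact hmain
      | false =>
          have hup : up (node L R) = node ((L.map up) ++
              [node [int (Rout (node (L.map up) (R.map up)))]
                    [int (Rout (node (L.map up) (R.map up)))]]) (R.map up) := by
            rw [up_node, hpar]; rfl
          rw [hup, addLeftStar X (L.map up) (R.map up) q hC' hX]
          exact hmain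
termination_by G X => sizeOf G + sizeOf X
decreasing_by all_goals omega

theorem down_Rf : ∀ (G X : WT) (p q : Bool), IsWT G p → IsWT X q → Rf ((down G).add X) = Rf (G.add X)
  | int n, X, p, q, hG, hX => by rw [down_int]
  | node L R, X, p, q, hG, hX => by
      obtain ⟨hL, hR, hLp, hRp⟩ := isWT_node_inv hG
      have hpar := par_eq_of_isWT hG
      have hC' : IsWT (node (L.map down) (R.map down)) p := by
        have h := IsWT.node (L := L.map down) (R := R.map down) (p := !p)
          (by simp [hL]) (by simp [hR])
          (by intro g hg
              obtain ⟨g0, hg0, rfl⟩ := List.mem_map.1 hg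
              exact isWT_down g0 (!p) (hLp g0 hg0))
          (by intro g hg
              obtain ⟨g0, hg0, rfl⟩ := List.mem_map.1 hg
              exact isWT_down g0 (!p) (hRp g0 hg0))
        simpa using h
      have hstep : ∀ x (qx : Bool), IsWT x qx → sizeOf x < sizeOf X →
          Rf ((node (L.map down) (R.map down)).add x) = Rf ((node L R).add x) := by
        intro x qx hx hsz
        have e1 := down_Rf (node L R) x p qx hG hx
        cases p with
        | true =>
            have hup : down (node L R) = node (L.map down) (R.map down) := by
              rw [down_node, hpar]; rfl
            rw [hup] at e1; exact e1
        | false =>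
            have hup : down (node L R) = node (L.map down) ((R.map down) ++
                [node [int (Lout (node (L.map down) (R.map down)))]
                      [int (Lout (node (L.map down) (R.map down)))]]) := by
              rw [down_node, hpar]; rfl
            rw [hup] at e1
            rw [← addRightStar x (L.map down) (R.map down) qx hC' hx]
            exact e1
      have hmain : Rf ((node (L.map down) (R.map down)).add X) = Rf ((node L R).add X) := by
        cases hxq : xor p q with
        | true =>
            rw [Rf_add_odd hC' hX hxq, Rf_add_odd hG hX hxq]
            simp only [ropts]
            congr 1
            congr 1
            · rw [List.map_map]
              refine List.map_congr_left (fun g hg => ?_)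
              have hsz := sizeOf_lt_node_right (L := L) hg
              exact down_Rf g X (!p) q (hRp g hg) hX
            · refine List.map_congr_left (fun x hx => ?_)
              cases X with
              | int k => simp [ropts] at hx
              | node XL XR =>
                  simp only [ropts] at hx
                  obtain ⟨hXL, hXR, hXLp, hXRp⟩ := isWT_node_inv hX
                  exact hstep x (!q) (hXRp x hx) (sizeOf_lt_node_right (L := XL) hx)
        | false =>
            rw [Rf_add_even hC' hX hxq (Or.inl ⟨_, _, rfl⟩),
                Rf_add_even hG hX hxq (Or.inl ⟨_, _, rfl⟩)]
            simp only [lopts]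
            congr 1
            congr 1
            · rw [List.map_map]
              refine List.map_congr_left (fun g hg => ?_)
              have hsz := sizeOf_lt_node_left (R := R) hg
              exact down_Rf g X (!p) q (hLp g hg) hX
            · refine List.map_congr_left (fun x hx => ?_)
              cases X with
              | int k => simp [lopts] at hx
              | node XL XR =>
                  simp only [lopts] at hx
                  obtain ⟨hXL, hXR, hXLp, hXRp⟩ := isWT_node_inv hX
                  exact hstep x (!q) (hXLp x hx) (sizeOf_lt_node_left (R := XR) hx)
      cases p with
      | true =>
          have hup : down (node L R) = node (L.map down) (R.map down) := by
            rw [down_node, hpar]; rfl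
          rw [hup]; exact hmain
      | false =>
          have hup : down (node L R) = node (L.map down) ((R.map down) ++
              [node [int (Lout (node (L.map down) (R.map down)))]
                    [int (Lout (node (L.map down) (R.map down)))]]) := by
            rw [down_node, hpar]; rfl
          rw [hup, addRightStar X (L.map down) (R.map down) q hC' hX]
          exact hmain
termination_by G X => sizeOf G + sizeOf X
decreasing_by all_goals omega

end WT
namespace WT

theorem up_mono : ∀ (G X : WT) (p : Bool), IsWT G p →
    Lout (G.add X) ≤ Lout ((up G).add X) ∧ Rout (G.add X) ≤ Rout ((up G).add X)
  | int n, X, p, hG => by rw [up_int]; exact ⟨le_refl _, le_refl _⟩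
  | node L R, X, p, hG => by
      obtain ⟨hL, hR, hLp, hRp⟩ := isWT_node_inv hG
      have hpar := par_eq_of_isWT hG
      obtain ⟨EX, hup⟩ : ∃ EX, up (node L R) = node ((L.map up) ++ EX) (R.map up) := by
        cases p with
        | true => exact ⟨[], by rw [up_node, hpar]; simp⟩
        | false =>
            exact ⟨[node [int (Rout (node (L.map up) (R.map up)))]
                      [int (Rout (node (L.map up) (R.map up)))]], by rw [up_node, hpar]; rfl⟩
      rw [hup, add_node_left, add_node_left]
      simp only [lopts, ropts]
      constructor
      · rw [Lout_node, Lout_node]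
        simp only [List.map_append, List.map_map]
        refine lmax_le (by simp [hL]) ?_
        intro a ha
        rcases List.mem_append.1 ha with ha | ha
        · obtain ⟨g, hg, rfl⟩ := List.mem_map.1 ha
          have hsz := sizeOf_lt_node_left (R := R) hg
          have hrec := (up_mono g X (!p) (hLp g hg)).2
          exact le_trans hrec (le_lmax_of_mem (List.mem_append_left _
            (List.mem_append_left _ (List.mem_map.2 ⟨g, hg, rfl⟩))))
        · obtain ⟨x, hx, rfl⟩ := List.mem_map.1 ha
          have hsz := sizeOf_lt_of_mem_lopts hx
          have hrec := (up_mono (node L R) x p hG).2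
          rw [hup] at hrec
          exact le_trans hrec (le_lmax_of_mem (List.mem_append_right _
            (List.mem_map.2 ⟨x, hx, rfl⟩)))
      · rw [Rout_node, Rout_node]
        simp only [List.map_append, List.map_map]
        have hmem := lmin_mem (l := (R.map (fun g => Lout ((up g).add X))) ++
            (X.ropts.map (fun x => Lout ((node ((L.map up) ++ EX) (R.map up)).add x))))
          (by simp [hR])
        rcases List.mem_append.1 hmem with hb | hb
        · obtain ⟨g, hg, hval⟩ := List.mem_map.1 hb
          have hsz := sizeOf_lt_node_right (L := L) hg
          have hrec := (up_mono g X (!p) (hRp g hg)).1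
          refine le_trans (le_trans (lmin_le_of_mem (List.mem_append_left _
            (List.mem_map.2 ⟨g, hg, rfl⟩))) hrec) (le_of_eq ?_)
          exact hval
        · obtain ⟨x, hx, hval⟩ := List.mem_map.1 hb
          have hsz := sizeOf_lt_of_mem_ropts hx
          have hrec := (up_mono (node L R) x p hG).1
          rw [hup] at hrec
          refine le_trans (le_trans (lmin_le_of_mem (List.mem_append_right _
            (List.mem_map.2 ⟨x, hx, rfl⟩))) hrec) (le_of_eq ?_)
          exact hval
termination_by G X => sizeOf G + sizeOf X
decreasing_by all_goals omega

theorem down_mono : ∀ (G X : WT) (p : Bool), IsWT G p →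
    Lout ((down G).add X) ≤ Lout (G.add X) ∧ Rout ((down G).add X) ≤ Rout (G.add X)
  | int n, X, p, hG => by rw [down_int]; exact ⟨le_refl _, le_refl _⟩
  | node L R, X, p, hG => by
      obtain ⟨hL, hR, hLp, hRp⟩ := isWT_node_inv hG
      have hpar := par_eq_of_isWT hG
      obtain ⟨EX, hup⟩ : ∃ EX, down (node L R) = node (L.map down) ((R.map down) ++ EX) := by
        cases p with
        | true => exact ⟨[], by rw [down_node, hpar]; simp⟩
        | false =>
            exact ⟨[node [int (Lout (node (L.map down) (R.map down)))]
                      [int (Lout (node (L.map down) (R.map down)))]], by rw [down_node, hpar]; rfl⟩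
      rw [hup, add_node_left, add_node_left]
      simp only [lopts, ropts]
      constructor
      · rw [Lout_node, Lout_node]
        simp only [List.map_append, List.map_map]
        have hmem := lmax_mem (l := (L.map (fun g => Rout ((down g).add X))) ++
            (X.lopts.map (fun x => Rout ((node (L.map down) ((R.map down) ++ EX)).add x))))
          (by simp [hL])
        rcases List.mem_append.1 hmem with hb | hb
        · obtain ⟨g, hg, hval⟩ := List.mem_map.1 hb
          have hsz := sizeOf_lt_node_left (R := R) hg
          have hrec := (down_mono g X (!p) (hLp g hg)).2
          refine le_trans (le_of_eq ?_) (le_trans hrec (le_lmax_of_mem (List.mem_append_left _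
            (List.mem_map.2 ⟨g, hg, rfl⟩))))
          exact hval.symm
        · obtain ⟨x, hx, hval⟩ := List.mem_map.1 hb
          have hsz := sizeOf_lt_of_mem_lopts hx
          have hrec := (down_mono (node L R) x p hG).2
          rw [hup] at hrec
          refine le_trans (le_of_eq ?_) (le_trans hrec (le_lmax_of_mem (List.mem_append_right _
            (List.mem_map.2 ⟨x, hx, rfl⟩))))
          exact hval.symm
      · rw [Rout_node, Rout_node]
        simp only [List.map_append, List.map_map]
        refine le_lmin (by simp [hR]) ?_
        intro a ha
        rcases List.mem_append.1 ha with ha | ha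
        · obtain ⟨g, hg, rfl⟩ := List.mem_map.1 ha
          have hsz := sizeOf_lt_node_right (L := L) hg
          have hrec := (down_mono g X (!p) (hRp g hg)).1
          exact le_trans (lmin_le_of_mem (List.mem_append_left _
            (List.mem_append_left _ (List.mem_map.2 ⟨g, hg, rfl⟩)))) hrec
        · obtain ⟨x, hx, rfl⟩ := List.mem_map.1 ha
          have hsz := sizeOf_lt_of_mem_ropts hx
          have hrec := (down_mono (node L R) x p hG).1
          rw [hup] at hrec
          exact le_trans (lmin_le_of_mem (List.mem_append_right _
            (List.mem_map.2 ⟨x, hx, rfl⟩))) hrec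
termination_by G X => sizeOf G + sizeOf X
decreasing_by all_goals omega

end WT
namespace WT

theorem valued_node_inv {S : Set ℤ} {L R : List WT} (h : Valued S (node L R)) :
    (∀ g ∈ L, Valued S g) ∧ (∀ g ∈ R, Valued S g) := by
  cases h with
  | node h1 h2 => exact ⟨h1, h2⟩

theorem valued_int_inv {S : Set ℤ} {n : ℤ} (h : Valued S (int n)) : n ∈ S := by
  cases h with
  | int h => exact h

theorem outs_mem {S : Set ℤ} : ∀ (G : WT) (p : Bool), IsWT G p → Valued S G →
    Lout G ∈ S ∧ Rout G ∈ S
  | int n, p, hG, hS => by rw [Lout_int, Rout_int]; exact ⟨valued_int_inv hS, valued_int_inv hS⟩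
  | node L R, p, hG, hS => by
      obtain ⟨hL, hR, hLp, hRp⟩ := isWT_node_inv hG
      obtain ⟨hSL, hSR⟩ := valued_node_inv hS
      constructor
      · rw [Lout_node]
        have hmem := lmax_mem (l := L.map Rout) (by simp [hL])
        obtain ⟨g, hg, hval⟩ := List.mem_map.1 hmem
        have hsz := sizeOf_lt_node_left (R := R) hg
        rw [← hval]
        exact (outs_mem g (!p) (hLp g hg) (hSL g hg)).2
      · rw [Rout_node]
        have hmem := lmin_mem (l := R.map Lout) (by simp [hR])
        obtain ⟨g, hg, hval⟩ := List.mem_map.1 hmem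
        have hsz := sizeOf_lt_node_right (L := L) hg
        rw [← hval]
        exact (outs_mem g (!p) (hRp g hg) (hSR g hg)).1
termination_by G => sizeOf G
decreasing_by all_goals omega

theorem valued_up {S : Set ℤ} : ∀ (G : WT) (p : Bool), IsWT G p → Valued S G → Valued S (up G)
  | int n, p, hG, hS => by rw [up_int]; exact hS
  | node L R, p, hG, hS => by
      obtain ⟨hL, hR, hLp, hRp⟩ := isWT_node_inv hG
      obtain ⟨hSL, hSR⟩ := valued_node_inv hS
      have hpar := par_eq_of_isWT hG
      have hVL : ∀ g ∈ L.map up, Valued S g := by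
        intro g hg
        obtain ⟨g0, hg0, rfl⟩ := List.mem_map.1 hg
        have hsz := sizeOf_lt_node_left (R := R) hg0
        exact valued_up g0 (!p) (hLp g0 hg0) (hSL g0 hg0)
      have hVR : ∀ g ∈ R.map up, Valued S g := by
        intro g hg
        obtain ⟨g0, hg0, rfl⟩ := List.mem_map.1 hg
        have hsz := sizeOf_lt_node_right (L := L) hg0
        exact valued_up g0 (!p) (hRp g0 hg0) (hSR g0 hg0)
      have hC' : IsWT (node (L.map up) (R.map up)) p := by
        have h := IsWT.node (L := L.map up) (R := R.map up) (p := !p)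
          (by simp [hL]) (by simp [hR])
          (by intro g hg
              obtain ⟨g0, hg0, rfl⟩ := List.mem_map.1 hg
              exact isWT_up g0 (!p) (hLp g0 hg0))
          (by intro g hg
              obtain ⟨g0, hg0, rfl⟩ := List.mem_map.1 hg
              exact isWT_up g0 (!p) (hRp g0 hg0))
        simpa using h
      have hrS : Rout (node (L.map up) (R.map up)) ∈ S :=
        (outs_mem _ p hC' (Valued.node hVL hVR)).2
      rw [up_node, hpar]
      cases p with
      | true => exact Valued.node hVL hVR
      | false =>
          simp only [if_false, Bool.false_eq_true]
          refine Valued.node ?_ hVR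
          intro g hg
          rcases List.mem_append.1 hg with hg | hg
          · exact hVL g hg
          · simp at hg; subst hg
            refine Valued.node ?_ ?_ <;>
              (intro g hg; simp at hg; subst hg; exact Valued.int hrS)
termination_by G => sizeOf G
decreasing_by all_goals omega

theorem valued_down {S : Set ℤ} : ∀ (G : WT) (p : Bool), IsWT G p → Valued S G → Valued S (down G)
  | int n, p, hG, hS => by rw [down_int]; exact hS
  | node L R, p, hG, hS => by
      obtain ⟨hL, hR, hLp, hRp⟩ := isWT_node_inv hG
      obtain ⟨hSL, hSR⟩ := valued_node_inv hS
      have hpar := par_eq_of_isWT hG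
      have hVL : ∀ g ∈ L.map down, Valued S g := by
        intro g hg
        obtain ⟨g0, hg0, rfl⟩ := List.mem_map.1 hg
        have hsz := sizeOf_lt_node_left (R := R) hg0
        exact valued_down g0 (!p) (hLp g0 hg0) (hSL g0 hg0)
      have hVR : ∀ g ∈ R.map down, Valued S g := by
        intro g hg
        obtain ⟨g0, hg0, rfl⟩ := List.mem_map.1 hg
        have hsz := sizeOf_lt_node_right (L := L) hg0
        exact valued_down g0 (!p) (hRp g0 hg0) (hSR g0 hg0)
      have hC' : IsWT (node (L.map down) (R.map down)) p := by
        have h := IsWT.node (L := L.map down) (R := R.map down) (p := !p)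
          (by simp [hL]) (by simp [hR])
          (by intro g hg
              obtain ⟨g0, hg0, rfl⟩ := List.mem_map.1 hg
              exact isWT_down g0 (!p) (hLp g0 hg0))
          (by intro g hg
              obtain ⟨g0, hg0, rfl⟩ := List.mem_map.1 hg
              exact isWT_down g0 (!p) (hRp g0 hg0))
        simpa using h
      have hrS : Lout (node (L.map down) (R.map down)) ∈ S :=
        (outs_mem _ p hC' (Valued.node hVL hVR)).1
      rw [down_node, hpar]
      cases p with
      | true => exact Valued.node hVL hVR
      | false =>
          simp only [if_false, Bool.false_eq_true]
          refine Valued.node hVL ?_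
          intro g hg
          rcases List.mem_append.1 hg with hg | hg
          · exact hVR g hg
          · simp at hg; subst hg
            refine Valued.node ?_ ?_ <;>
              (intro g hg; simp at hg; subst hg; exact Valued.int hrS)
termination_by G => sizeOf G
decreasing_by all_goals omega

theorem exists_int_subgame : ∀ (G : WT) (p : Bool), IsWT G p → ∃ n : ℤ, Subgame (int n) G
  | int n, p, hG => ⟨n, Subgame.refl (int n)⟩
  | node L R, p, hG => by
      obtain ⟨hL, hR, hLp, hRp⟩ := isWT_node_inv hG
      obtain ⟨g, hg⟩ := List.exists_mem_of_ne_nil L hL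
      have hsz := sizeOf_lt_node_left (R := R) hg
      obtain ⟨n, hsub⟩ := exists_int_subgame g (!p) (hLp g hg)
      exact ⟨n, Subgame.left hg hsub⟩
termination_by G => sizeOf G
decreasing_by all_goals omega

theorem up_stable : ∀ (G : WT) (p : Bool), IsWT G p → ∀ H, Subgame H (up G) → IsWT H false →
    Rout H ≤ Lout H
  | int n, p, hG, H, hsub, hH => by
      rw [up_int] at hsub
      cases hsub
      rw [Rout_int, Lout_int]
  | node L R, p, hG, H, hsub, hH => by
      obtain ⟨hL, hR, hLp, hRp⟩ := isWT_node_inv hG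
      have hpar := par_eq_of_isWT hG
      have hC' : IsWT (node (L.map up) (R.map up)) p := by
        have h := IsWT.node (L := L.map up) (R := R.map up) (p := !p)
          (by simp [hL]) (by simp [hR])
          (by intro g hg
              obtain ⟨g0, hg0, rfl⟩ := List.mem_map.1 hg
              exact isWT_up g0 (!p) (hLp g0 hg0))
          (by intro g hg
              obtain ⟨g0, hg0, rfl⟩ := List.mem_map.1 hg
              exact isWT_up g0 (!p) (hRp g0 hg0))
        simpa using h
      have hmemL : ∀ {G'}, G' ∈ L.map up → Subgame H G' → Rout H ≤ Lout H := by
        intro G' hmem hsub'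
        obtain ⟨g0, hg0, rfl⟩ := List.mem_map.1 hmem
        have hsz := sizeOf_lt_node_left (R := R) hg0
        exact up_stable g0 (!p) (hLp g0 hg0) H hsub' hH
      have hmemR : ∀ {G'}, G' ∈ R.map up → Subgame H G' → Rout H ≤ Lout H := by
        intro G' hmem hsub'
        obtain ⟨g0, hg0, rfl⟩ := List.mem_map.1 hmem
        have hsz := sizeOf_lt_node_right (L := L) hg0
        exact up_stable g0 (!p) (hRp g0 hg0) H hsub' hH
      rw [up_node, hpar] at hsub
      cases p with
      | true =>
          simp only [if_true] at hsub
          cases hsub with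
          | refl => exact absurd (isWT_parity_unique hH hC') (by simp)
          | left hmem hsub' => exact hmemL hmem hsub'
          | right hmem hsub' => exact hmemR hmem hsub'
      | false =>
          simp only [if_false, Bool.false_eq_true] at hsub
          cases hsub with
          | refl =>
              rw [Rout_node, Lout_node]
              refine le_trans (le_of_eq ?_) (le_lmax_of_mem (List.mem_map.2
                ⟨node [int (Rout (node (L.map up) (R.map up)))]
                      [int (Rout (node (L.map up) (R.map up)))],
                 List.mem_append_right _ (by simp), rfl⟩))
              rw [Rout_star, Rout_node]
          | left hmem hsub' =>
              rcases List.mem_append.1 hmem with hmem | hmem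
              · exact hmemL hmem hsub'
              · simp at hmem; subst hmem
                cases hsub' with
                | refl => exact absurd (isWT_parity_unique hH (isWT_star _)) (by simp)
                | left hmem2 hsub2 =>
                    simp at hmem2; subst hmem2
                    cases hsub2
                    rw [Rout_int, Lout_int]
                | right hmem2 hsub2 =>
                    simp at hmem2; subst hmem2
                    cases hsub2
                    rw [Rout_int, Lout_int]
          | right hmem hsub' => exact hmemR hmem hsub'
termination_by G => sizeOf G
decreasing_by all_goals omega

theorem down_stable : ∀ (G : WT) (p : Bool), IsWT G p → ∀ H, Subgame H (down G) → IsWT H false →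
    Rout H ≤ Lout H
  | int n, p, hG, H, hsub, hH => by
      rw [down_int] at hsub
      cases hsub
      rw [Rout_int, Lout_int]
  | node L R, p, hG, H, hsub, hH => by
      obtain ⟨hL, hR, hLp, hRp⟩ := isWT_node_inv hG
      have hpar := par_eq_of_isWT hG
      have hC' : IsWT (node (L.map down) (R.map down)) p := by
        have h := IsWT.node (L := L.map down) (R := R.map down) (p := !p)
          (by simp [hL]) (by simp [hR])
          (by intro g hg
              obtain ⟨g0, hg0, rfl⟩ := List.mem_map.1 hg
              exact isWT_down g0 (!p) (hLp g0 hg0))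
          (by intro g hg
              obtain ⟨g0, hg0, rfl⟩ := List.mem_map.1 hg
              exact isWT_down g0 (!p) (hRp g0 hg0))
        simpa using h
      have hmemL : ∀ {G'}, G' ∈ L.map down → Subgame H G' → Rout H ≤ Lout H := by
        intro G' hmem hsub'
        obtain ⟨g0, hg0, rfl⟩ := List.mem_map.1 hmem
        have hsz := sizeOf_lt_node_left (R := R) hg0
        exact down_stable g0 (!p) (hLp g0 hg0) H hsub' hH
      have hmemR : ∀ {G'}, G' ∈ R.map down → Subgame H G' → Rout H ≤ Lout H := by
        intro G' hmem hsub'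
        obtain ⟨g0, hg0, rfl⟩ := List.mem_map.1 hmem
        have hsz := sizeOf_lt_node_right (L := L) hg0
        exact down_stable g0 (!p) (hRp g0 hg0) H hsub' hH
      rw [down_node, hpar] at hsub
      cases p with
      | true =>
          simp only [if_true] at hsub
          cases hsub with
          | refl => exact absurd (isWT_parity_unique hH hC') (by simp)
          | left hmem hsub' => exact hmemL hmem hsub'
          | right hmem hsub' => exact hmemR hmem hsub'
      | false =>
          simp only [if_false, Bool.false_eq_true] at hsub
          cases hsub with
          | refl =>
              refine le_trans (le_of_eq (Rout_node _ _)) (le_trans (lmin_le_of_mem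
                (List.mem_map.2
                  ⟨node [int (Lout (node (L.map down) (R.map down)))]
                        [int (Lout (node (L.map down) (R.map down)))],
                   List.mem_append_right _ (by simp), rfl⟩)) ?_)
              rw [Lout_star]
              have h2 : Lout (node (L.map down) ((R.map down) ++
                  [node [int (Lout (node (L.map down) (R.map down)))]
                        [int (Lout (node (L.map down) (R.map down)))]])) =
                  Lout (node (L.map down) (R.map down)) := by
                simp only [Lout_node, List.map_map]
              rw [h2]
          | right hmem hsub' =>
              rcases List.mem_append.1 hmem with hmem | hmem
              · exact hmemR hmem hsub'
              · simp at hmem; subst hmem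
                cases hsub' with
                | refl => exact absurd (isWT_parity_unique hH (isWT_star _)) (by simp)
                | left hmem2 hsub2 =>
                    simp at hmem2; subst hmem2
                    cases hsub2
                    rw [Rout_int, Lout_int]
                | right hmem2 hsub2 =>
                    simp at hmem2; subst hmem2
                    cases hsub2
                    rw [Rout_int, Lout_int]
          | left hmem hsub' => exact hmemL hmem hsub'
termination_by G => sizeOf G
decreasing_by all_goals omega

end WT
namespace WT

theorem gap_up {G : WT} {p : Bool} (hG : IsWT G p) : gap (up G) false = ((0 : ℤ) : WithBot ℤ) := by
  refine IsGreatest.csSup_eq ⟨?_, ?_⟩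
  · obtain ⟨n, hsub⟩ := exists_int_subgame (up G) p (isWT_up G p hG)
    refine ⟨int n, hsub, IsWT.int n, ?_⟩
    rw [Rout_int, Lout_int]
    norm_num
  · rintro x ⟨H, hsub, hHwt, rfl⟩
    have h := up_stable G p hG H hsub hHwt
    exact_mod_cast sub_nonpos.2 h

theorem gap_down {G : WT} {p : Bool} (hG : IsWT G p) : gap (down G) false = ((0 : ℤ) : WithBot ℤ) := by
  refine IsGreatest.csSup_eq ⟨?_, ?_⟩
  · obtain ⟨n, hsub⟩ := exists_int_subgame (down G) p (isWT_down G p hG)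
    refine ⟨int n, hsub, IsWT.int n, ?_⟩
    rw [Rout_int, Lout_int]
    norm_num
  · rintro x ⟨H, hsub, hHwt, rfl⟩
    have h := down_stable G p hG H hsub hHwt
    exact_mod_cast sub_nonpos.2 h

end WT

theorem upside_downside' (G : WT) (p : Bool) (hG : WT.IsWT G p) (S : Set ℤ) (hS : G.Valued S) :
    ∃ Gp Gm : WT,
      WT.IsWT Gp p ∧ WT.IsWT Gm p ∧
      Gp.gap false = ((0 : ℤ) : WithBot ℤ) ∧ Gm.gap false = ((0 : ℤ) : WithBot ℤ) ∧
      Gp.Valued S ∧ Gm.Valued S ∧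
      (∀ X : WT, X.Wt → (G.add X).Lf = (Gp.add X).Lf) ∧
      (∀ X : WT, X.Wt → (G.add X).Rf = (Gm.add X).Rf) ∧
      WT.Ge Gp Gm := by
  refine ⟨WT.up G, WT.down G, WT.isWT_up G p hG, WT.isWT_down G p hG,
    WT.gap_up hG, WT.gap_down hG, WT.valued_up G p hG hS, WT.valued_down G p hG hS, ?_, ?_, ?_⟩
  · rintro X ⟨q, hX⟩
    exact (WT.up_Lf G X p q hG hX).symm
  · rintro X ⟨q, hX⟩
    exact (WT.down_Rf G X p q hG hX).symm
  · rintro X ⟨q, hX⟩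
    exact ⟨le_trans (WT.down_mono G X p hG).1 (WT.up_mono G X p hG).1,
      le_trans (WT.down_mono G X p hG).2 (WT.up_mono G X p hG).2⟩

/-- every well-tempered game G has an upside G⁺ and a downside G⁻ in I
(gap₀ = 0), with G ≈₊ G⁺, G ≈₋ G⁻, G⁺ ≳ G⁻, and G⁺, G⁻ S-valued whenever G is. -/
theorem upside_downside (G : WT) (p : Bool) (hG : WT.IsWT G p) (S : Set ℤ) (hS : G.Valued S) :
    ∃ Gp Gm : WT,
      WT.IsWT Gp p ∧ WT.IsWT Gm p ∧
      Gp.gap false = ((0 : ℤ) : WithBot ℤ) ∧ Gm.gap false = ((0 : ℤ) : WithBot ℤ) ∧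
      Gp.Valued S ∧ Gm.Valued S ∧
      (∀ X : WT, X.Wt → (G.add X).Lf = (Gp.add X).Lf) ∧
      (∀ X : WT, X.Wt → (G.add X).Rf = (Gm.add X).Rf) ∧
      WT.Ge Gp Gm := by
  exact upside_downside' G p hG S hS
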